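/- arXiv:2203.00576 — 2 statements merged into one kernel-verified Lean document; each statement's English description precedes it below -/
import Mathlib

section
/- Let β_1, …, β_m ∈ Γ, let t_1, …, t_m be distinct positive integers, and let Λ be a nonempty linearly ordered set with no greatest element together with a strictly increasing map γ : Λ → Γ. Then there exist b ∈ {1, …, m} and ρ ∈ Λ such that for every σ ∈ Λ with σ > ρ and every i ∈ {1, …, m} with i ≠ b, one has β_i + t_i·γ(σ) > β_b + t_b·γ(σ). -/
/-- Kaplansky's Lemma 4: given `β₁, …, β_m` in a linearly ordered abelian group `Γ`,
distinct positive integers `t₁, …, t_m`, and a strictly increasing `γ : Λ → Γ` from a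
nonempty linear order `Λ` with no greatest element, there are `b` and `ρ` such that for all
`σ > ρ` and all `i ≠ b`, `β_i + t_i·γ(σ) > β_b + t_b·γ(σ)`. -/
theorem stmt_0 {Γ : Type*} [AddCommGroup Γ] [LinearOrder Γ] [IsOrderedAddMonoid Γ]
    {Λ : Type*} [LinearOrder Λ] [Nonempty Λ]
    (hΛ : ∀ a : Λ, ∃ b : Λ, a < b)
    {m : ℕ} (hm : 0 < m) (β : Fin m → Γ) (t : Fin m → ℕ)
    (ht : ∀ i, 0 < t i) (htinj : Function.Injective t)
    (γ : Λ → Γ) (hγ : StrictMono γ) :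
    ∃ b : Fin m, ∃ ρ : Λ, ∀ σ : Λ, ρ < σ → ∀ i : Fin m, i ≠ b →
      β b + t b • γ σ < β i + t i • γ σ := by
  classical
  -- pairwise eventual comparison, in the case `t i < t j`
  have pair : ∀ i j : Fin m, t i < t j → ∃ ρ : Λ,
      (∀ σ, ρ < σ → β i + t i • γ σ < β j + t j • γ σ) ∨
      (∀ σ, ρ < σ → β j + t j • γ σ < β i + t i • γ σ) := by
    intro i j hij
    set n := t j - t i with hn
    have hn0 : n ≠ 0 := Nat.sub_ne_zero_of_lt hij
    have hkey : ∀ g : Γ, (β i + t i • g < β j + t j • g ↔ β i - β j < n • g) := by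
      intro g
      have h : t j • g = n • g + t i • g := by
        rw [← add_nsmul, Nat.sub_add_cancel hij.le]
      rw [h, ← add_assoc, add_lt_add_iff_right, sub_lt_iff_lt_add']
    have hkey2 : ∀ g : Γ, (β j + t j • g < β i + t i • g ↔ n • g < β i - β j) := by
      intro g
      have h : t j • g = n • g + t i • g := by
        rw [← add_nsmul, Nat.sub_add_cancel hij.le]
      rw [h, ← add_assoc, add_lt_add_iff_right, lt_sub_iff_add_lt']
    by_cases hex : ∃ σ : Λ, β i - β j < n • γ σ
    · obtain ⟨ρ, hρ⟩ := hex
      refine ⟨ρ, Or.inl fun σ hσ => ?_⟩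
      rw [hkey]
      exact hρ.trans (nsmul_lt_nsmul_right hn0 (hγ hσ))
    · push_neg at hex
      refine ⟨Classical.arbitrary Λ, Or.inr fun σ _ => ?_⟩
      rw [hkey2]
      refine lt_of_le_of_ne (hex σ) fun heq => ?_
      obtain ⟨σ', hσ'⟩ := hΛ σ
      exact absurd ((heq ▸ nsmul_lt_nsmul_right hn0 (hγ hσ')).trans_le (hex σ')) (lt_irrefl _)
  -- pairwise eventual comparison for any distinct pair
  have pairAll : ∀ i j : Fin m, ∃ ρ : Λ, i ≠ j →
      ((∀ σ, ρ < σ → β i + t i • γ σ < β j + t j • γ σ) ∨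
       (∀ σ, ρ < σ → β j + t j • γ σ < β i + t i • γ σ)) := by
    intro i j
    by_cases hij : i = j
    · exact ⟨Classical.arbitrary Λ, fun h => absurd hij h⟩
    · have htne : t i ≠ t j := fun h => hij (htinj h)
      rcases lt_or_gt_of_ne htne with h | h
      · obtain ⟨ρ, hρ⟩ := pair i j h
        exact ⟨ρ, fun _ => hρ⟩
      · obtain ⟨ρ, hρ⟩ := pair j i h
        exact ⟨ρ, fun _ => hρ.symm⟩
  choose r hr using pairAll
  obtain ⟨ρStar, hρStar⟩ :=
    Finset.exists_le ((Finset.univ : Finset (Fin m × Fin m)).image fun p => r p.1 p.2)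
  obtain ⟨σ₀, hσ₀⟩ := hΛ ρStar
  obtain ⟨b, -, hb⟩ := Finset.exists_min_image Finset.univ
    (fun i => β i + t i • γ σ₀) ⟨⟨0, hm⟩, Finset.mem_univ _⟩
  refine ⟨b, ρStar, fun σ hσ i hib => ?_⟩
  have hrle : r b i ≤ ρStar :=
    hρStar _ (Finset.mem_image.2 ⟨(b, i), Finset.mem_univ _, rfl⟩)
  rcases hr b i (Ne.symm hib) with hP | hP
  · exact hP σ (lt_of_le_of_lt hrle hσ)
  · exact absurd (hP σ₀ (lt_of_le_of_lt hrle hσ₀)) (not_lt.2 (hb i (Finset.mem_univ _)))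
end

section
/- Let Q be a key polynomial for ν of degree n, and let f, q, r ∈ K[x] with f = qQ + r, q ≠ 0, and f nonconstant. Suppose γ ∈ ℝ satisfies ε(f) ≤ γ, γ < ε(Q), and moreover ε(r) ≤ γ in case r is nonconstant. Then ν(f) = ν(r) and ν_Q(qQ) − (ε(Q) − γ) ≥ ν(f). -/
open Polynomial

noncomputable section

/-- A rank-one valuation on `K[x]`, modeled as a map to `ℝ ∪ {∞}`. -/
structure PolyVal (K : Type*) [Field K] where
  ν : Polynomial K → WithTop ℝ
  ν_eq_top_iff : ∀ f : Polynomial K, ν f = ⊤ ↔ f = 0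
  ν_mul : ∀ f g : Polynomial K, ν (f * g) = ν f + ν g
  ν_add : ∀ f g : Polynomial K, min (ν f) (ν g) ≤ ν (f + g)

namespace PolyVal

variable {K : Type*} [Field K]

/-- The real value of `ν f`, with junk value `0` when `f = 0`. -/
def vr (v : PolyVal K) (f : Polynomial K) : ℝ := WithTop.untopD 0 (v.ν f)

/-- `ε(f) = max{(ν(f) − ν(∂_b f))/b : 1 ≤ b ≤ deg f, ∂_b f ≠ 0}` (for nonconstant `f`). -/
def eps (v : PolyVal K) (f : Polynomial K) : ℝ :=
  sSup {x : ℝ | ∃ b : ℕ, 1 ≤ b ∧ b ≤ f.natDegree ∧ hasseDeriv b f ≠ 0 ∧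
    x = (v.vr f - v.vr (hasseDeriv b f)) / b}

/-- A key polynomial for `ν`: a monic polynomial `Q` such that every (nonconstant)
`f` with `ε(f) ≥ ε(Q)` satisfies `deg f ≥ deg Q`. -/
def IsKeyPol (v : PolyVal K) (Q : Polynomial K) : Prop :=
  Q.Monic ∧ 0 < Q.natDegree ∧
    ∀ f : Polynomial K, 0 < f.natDegree → v.eps Q ≤ v.eps f → Q.natDegree ≤ f.natDegree

/-- `Ψ_n`: the set of key polynomials for `ν` of degree `n`. -/
def Psi (v : PolyVal K) (n : ℕ) : Set (Polynomial K) :=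
  {Q | v.IsKeyPol Q ∧ Q.natDegree = n}

end PolyVal

variable {K : Type*} [Field K]

/-- The `i`-th coefficient of the `Q`-expansion of `f` (for monic `Q`). -/
def qCoeff (Q f : Polynomial K) (i : ℕ) : Polynomial K := (f /ₘ Q ^ i) %ₘ Q

namespace PolyVal

/-- The truncation `ν_Q(f) = min_{0 ≤ i ≤ r} ν(a_i Q^i)` along the `Q`-expansion of `f`. -/
def nuQ (v : PolyVal K) (Q f : Polynomial K) : WithTop ℝ :=
  (Finset.range (f.natDegree / Q.natDegree + 1)).inf fun i => v.ν (qCoeff Q f i * Q ^ i)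

/-- The real value of `ν_Q(f)`, with junk value `0` when `ν_Q(f) = ∞`. -/
def nuQr (v : PolyVal K) (Q f : Polynomial K) : ℝ := WithTop.untopD 0 (v.nuQ Q f)

/-- `f` is `Ψ_n`-stable: `ν_{Q'}(f) = ν(f)` for some `Q' ∈ Ψ_n`. -/
def Stable (v : PolyVal K) (n : ℕ) (f : Polynomial K) : Prop :=
  ∃ Q' ∈ v.Psi n, v.nuQ Q' f = v.ν f

/-- A limit key polynomial for `Ψ_n`: a monic non-stable polynomial of minimal degree
among non-stable polynomials. -/
def IsLimitKeyPol (v : PolyVal K) (n : ℕ) (F : Polynomial K) : Prop :=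
  F.Monic ∧ ¬ v.Stable n F ∧ ∀ g : Polynomial K, ¬ v.Stable n g → F.natDegree ≤ g.natDegree

end PolyVal

section Aux
open scoped Classical
variable {K : Type*} [Field K] (v : PolyVal K)
namespace PolyVal

lemma nu_ne_top {f : Polynomial K} (hf : f ≠ 0) : v.ν f ≠ ⊤ := by
  simpa [v.ν_eq_top_iff] using hf

lemma nu_coe_vr {f : Polynomial K} (hf : f ≠ 0) : v.ν f = ((v.vr f : ℝ) : WithTop ℝ) := by
  have h := v.nu_ne_top hf
  cases hx : v.ν f with
  | top => exact absurd hx h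
  | coe x => simp [vr, hx]

lemma nu_zero_poly : v.ν 0 = ⊤ := (v.ν_eq_top_iff 0).2 rfl

lemma nu_one : v.ν 1 = 0 := by
  have h := v.ν_mul 1 1
  rw [mul_one] at h
  have h1 : v.ν 1 ≠ ⊤ := v.nu_ne_top one_ne_zero
  cases hx : v.ν 1 with
  | top => exact absurd hx h1
  | coe x =>
    rw [hx, ← WithTop.coe_add] at h
    have : x = x + x := WithTop.coe_injective h
    have : x = 0 := by linarith
    simp [this]

lemma nu_neg (f : Polynomial K) : v.ν (-f) = v.ν f := by
  have hm : v.ν (-1 : Polynomial K) = 0 := by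
    have h := v.ν_mul (-1) (-1)
    rw [neg_one_mul, neg_neg, v.nu_one] at h
    have h1 : v.ν (-1 : Polynomial K) ≠ ⊤ := v.nu_ne_top (by norm_num)
    cases hx : v.ν (-1 : Polynomial K) with
    | top => exact absurd hx h1
    | coe x =>
      rw [hx, ← WithTop.coe_add] at h
      have : x + x = (0 : ℝ) := by exact_mod_cast h.symm
      have : x = 0 := by linarith
      simp [this]
  calc v.ν (-f) = v.ν ((-1) * f) := by rw [neg_one_mul]
    _ = v.ν f := by rw [v.ν_mul, hm, zero_add]

lemma nu_add_eq_left {f g : Polynomial K} (h : v.ν f < v.ν g) : v.ν (f + g) = v.ν f := by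
  refine le_antisymm ?_ (le_trans (le_min le_rfl h.le) (v.ν_add f g))
  by_contra hc
  push_neg at hc
  have h2 : v.ν f = v.ν ((f + g) + (-g)) := by ring_nf
  have h3 : min (v.ν (f + g)) (v.ν (-g)) ≤ v.ν f := h2 ▸ v.ν_add (f + g) (-g)
  rw [v.nu_neg] at h3
  rcases min_le_iff.1 h3 with h4 | h4
  · exact absurd h4 (not_le.2 hc)
  · exact absurd h4 (not_le.2 h)


lemma le_nu_sum {ι : Type*} {s : Finset ι} {t : ι → Polynomial K} {c : WithTop ℝ}
    (h : ∀ i ∈ s, c ≤ v.ν (t i)) : c ≤ v.ν (∑ i ∈ s, t i) := by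
  classical
  induction s using Finset.cons_induction with
  | empty => simp [v.nu_zero_poly]
  | cons a s ha ih =>
    rw [Finset.sum_cons]
    refine le_trans ?_ (v.ν_add _ _)
    exact le_min (h a (Finset.mem_cons_self a s))
      (ih fun i hi => h i (Finset.mem_cons_of_mem hi))

lemma lt_nu_sum {ι : Type*} {s : Finset ι} {t : ι → Polynomial K} {c : WithTop ℝ}
    (hc : c ≠ ⊤) (h : ∀ i ∈ s, c < v.ν (t i)) : c < v.ν (∑ i ∈ s, t i) := by
  classical
  induction s using Finset.cons_induction with
  | empty => simpa [v.nu_zero_poly] using lt_top_iff_ne_top.2 hc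
  | cons a s ha ih =>
    rw [Finset.sum_cons]
    refine lt_of_lt_of_le ?_ (v.ν_add _ _)
    exact lt_min (h a (Finset.mem_cons_self a s))
      (ih fun i hi => h i (Finset.mem_cons_of_mem hi))

lemma nu_sum_eq {ι : Type*} {s : Finset ι} {t : ι → Polynomial K} {i₀ : ι}
    (h0 : i₀ ∈ s) (h : ∀ i ∈ s, i ≠ i₀ → v.ν (t i₀) < v.ν (t i)) :
    v.ν (∑ i ∈ s, t i) = v.ν (t i₀) := by
  classical
  rw [← Finset.add_sum_erase s t h0]
  rcases (s.erase i₀).eq_empty_or_nonempty with he | ⟨j, hj⟩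
  · rw [he, Finset.sum_empty, add_zero]
  · have htop : v.ν (t i₀) ≠ ⊤ :=
      (h j (Finset.mem_of_mem_erase hj) (Finset.ne_of_mem_erase hj)).ne_top
    exact v.nu_add_eq_left (v.lt_nu_sum htop (fun i hi =>
      h i (Finset.mem_of_mem_erase hi) (Finset.ne_of_mem_erase hi)))


/-- The set of admissible derivative indices. -/
def epsFin (h : Polynomial K) : Finset ℕ :=
  (Finset.Icc 1 h.natDegree).filter fun b => hasseDeriv b h ≠ 0

lemma mem_epsFin {h : Polynomial K} {b : ℕ} :
    b ∈ epsFin h ↔ 1 ≤ b ∧ b ≤ h.natDegree ∧ hasseDeriv b h ≠ 0 := by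
  simp [epsFin, Finset.mem_filter, Finset.mem_Icc, and_assoc]

lemma epsFin_nonempty {h : Polynomial K} (hh : 0 < h.natDegree) : (epsFin h).Nonempty := by
  refine ⟨h.natDegree, mem_epsFin.2 ⟨hh, le_rfl, ?_⟩⟩
  intro hz
  have hc : (hasseDeriv h.natDegree h).coeff 0 = h.coeff h.natDegree := by
    rw [hasseDeriv_coeff]; simp
  rw [hz] at hc
  simp only [Polynomial.coeff_zero] at hc
  have h0 : h ≠ 0 := fun h0 => by simp [h0] at hh
  exact (Polynomial.leadingCoeff_ne_zero.2 h0) hc.symm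

lemma eps_eq_max' {h : Polynomial K} (hh : 0 < h.natDegree) :
    v.eps h = ((epsFin h).image
      (fun b => (v.vr h - v.vr (hasseDeriv b h)) / b)).max'
      (Finset.Nonempty.image (epsFin_nonempty hh) _) := by
  have hset : {x : ℝ | ∃ b : ℕ, 1 ≤ b ∧ b ≤ h.natDegree ∧ hasseDeriv b h ≠ 0 ∧
      x = (v.vr h - v.vr (hasseDeriv b h)) / b} =
      ↑((epsFin h).image (fun b => (v.vr h - v.vr (hasseDeriv b h)) / b)) := by
    ext x
    simp only [Finset.coe_image, Set.mem_image, Finset.mem_coe, Set.mem_setOf_eq]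
    constructor
    · rintro ⟨b, h1, h2, h3, h4⟩
      exact ⟨b, mem_epsFin.2 ⟨h1, h2, h3⟩, h4.symm⟩
    · rintro ⟨b, hb, h4⟩
      obtain ⟨h1, h2, h3⟩ := mem_epsFin.1 hb
      exact ⟨b, h1, h2, h3, h4.symm⟩
  rw [eps, hset]
  exact Finset.Nonempty.csSup_eq_max' _

lemma div_le_eps {h : Polynomial K} (hh : 0 < h.natDegree) {b : ℕ} (hb : b ∈ epsFin h) :
    (v.vr h - v.vr (hasseDeriv b h)) / b ≤ v.eps h := by
  rw [v.eps_eq_max' hh]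
  exact Finset.le_max' _ _ (Finset.mem_image_of_mem (fun b => (v.vr h - v.vr (hasseDeriv b h)) / b) hb)

/-- The largest index `b` realizing `eps`. -/
def bMax (h : Polynomial K) : ℕ :=
  if H : 0 < h.natDegree then
    (((epsFin h).filter fun b => (v.vr h - v.vr (hasseDeriv b h)) / b = v.eps h).max'
      (by
        have hmem : v.eps h ∈ (epsFin h).image
            (fun b => (v.vr h - v.vr (hasseDeriv b h)) / b) := by
          rw [v.eps_eq_max' H]; exact Finset.max'_mem _ _
        obtain ⟨b, hb, hbe⟩ := Finset.mem_image.1 hmem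
        exact ⟨b, Finset.mem_filter.2 ⟨hb, hbe⟩⟩))
  else 0

lemma bMax_spec {h : Polynomial K} (hh : 0 < h.natDegree) :
    v.bMax h ∈ epsFin h ∧ (v.vr h - v.vr (hasseDeriv (v.bMax h) h)) / (v.bMax h) = v.eps h ∧
      ∀ b ∈ epsFin h, v.bMax h < b →
        (v.vr h - v.vr (hasseDeriv b h)) / b ≠ v.eps h := by
  rw [bMax, dif_pos hh]
  set T := (epsFin h).filter fun b => (v.vr h - v.vr (hasseDeriv b h)) / b = v.eps h with hT
  have hne : T.Nonempty := by
    have hmem : v.eps h ∈ (epsFin h).image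
        (fun b => (v.vr h - v.vr (hasseDeriv b h)) / b) := by
      rw [v.eps_eq_max' hh]; exact Finset.max'_mem _ _
    obtain ⟨b, hb, hbe⟩ := Finset.mem_image.1 hmem
    exact ⟨b, Finset.mem_filter.2 ⟨hb, hbe⟩⟩
  refine ⟨(Finset.mem_filter.1 (T.max'_mem _)).1, (Finset.mem_filter.1 (T.max'_mem _)).2, ?_⟩
  intro b hb hlt he
  exact absurd (Finset.le_max' T b (Finset.mem_filter.2 ⟨hb, he⟩)) (not_le.2 hlt)

lemma le_nu_sum_add {ι : Type*} {s : Finset ι} {t : ι → Polynomial K} {c k : WithTop ℝ}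
    (h : ∀ i ∈ s, c ≤ v.ν (t i) + k) : c ≤ v.ν (∑ i ∈ s, t i) + k := by
  classical
  induction s using Finset.cons_induction with
  | empty => simp [v.nu_zero_poly, top_add]
  | cons a s ha ih =>
    rw [Finset.sum_cons]
    have h1 : min (v.ν (t a)) (v.ν (∑ i ∈ s, t i)) + k ≤ v.ν (t a + ∑ i ∈ s, t i) + k :=
      add_le_add_left (v.ν_add _ _) k
    refine le_trans ?_ h1
    rcases min_cases (v.ν (t a)) (v.ν (∑ i ∈ s, t i)) with ⟨hm, _⟩ | ⟨hm, _⟩ <;> rw [hm]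
    · exact h a (Finset.mem_cons_self a s)
    · exact ih fun i hi => h i (Finset.mem_cons_of_mem hi)

lemma lt_nu_sum_add {ι : Type*} {s : Finset ι} {t : ι → Polynomial K} {c k : WithTop ℝ}
    (hc : c ≠ ⊤) (h : ∀ i ∈ s, c < v.ν (t i) + k) : c < v.ν (∑ i ∈ s, t i) + k := by
  classical
  induction s using Finset.cons_induction with
  | empty =>
    simp only [Finset.sum_empty, v.nu_zero_poly, top_add]
    exact lt_top_iff_ne_top.2 hc
  | cons a s ha ih =>
    rw [Finset.sum_cons]
    have h1 : min (v.ν (t a)) (v.ν (∑ i ∈ s, t i)) + k ≤ v.ν (t a + ∑ i ∈ s, t i) + k :=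
      add_le_add_left (v.ν_add _ _) k
    refine lt_of_lt_of_le ?_ h1
    rcases min_cases (v.ν (t a)) (v.ν (∑ i ∈ s, t i)) with ⟨hm, _⟩ | ⟨hm, _⟩ <;> rw [hm]
    · exact h a (Finset.mem_cons_self a s)
    · exact ih fun i hi => h i (Finset.mem_cons_of_mem hi)

lemma nu_le_deriv_add {h : Polynomial K} (hh : 0 < h.natDegree) {γ : ℝ} (hγ : v.eps h ≤ γ)
    {b : ℕ} (hb : 1 ≤ b) : v.ν h ≤ v.ν (hasseDeriv b h) + ((b * γ : ℝ) : WithTop ℝ) := by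
  by_cases hz : hasseDeriv b h = 0
  · rw [hz, v.nu_zero_poly, top_add]; exact le_top
  · have hble : b ≤ h.natDegree := by
      by_contra hlt; push_neg at hlt
      exact hz (hasseDeriv_eq_zero_of_lt_natDegree h b hlt)
    have hreal := (v.div_le_eps hh (mem_epsFin.2 ⟨hb, hble, hz⟩)).trans hγ
    have hb0 : (0:ℝ) < b := by exact_mod_cast hb
    have hR : v.vr h ≤ v.vr (hasseDeriv b h) + b * γ := by
      rw [div_le_iff₀ hb0] at hreal; linarith
    have h1 : h ≠ 0 := fun h0 => by simp [h0] at hh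
    rw [v.nu_coe_vr h1, v.nu_coe_vr hz, ← WithTop.coe_add]
    exact_mod_cast hR

lemma nu_lt_deriv_add {h : Polynomial K} (hne : h ≠ 0) {ε : ℝ} {b : ℕ} (hb : 1 ≤ b)
    (hreal : hasseDeriv b h ≠ 0 → b ≤ h.natDegree →
      (v.vr h - v.vr (hasseDeriv b h)) / b < ε) :
    v.ν h < v.ν (hasseDeriv b h) + ((b * ε : ℝ) : WithTop ℝ) := by
  by_cases hz : hasseDeriv b h = 0
  · rw [hz, v.nu_zero_poly, top_add]
    exact lt_top_iff_ne_top.2 (v.nu_ne_top hne)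
  · have hble : b ≤ h.natDegree := by
      by_contra hlt; push_neg at hlt
      exact hz (hasseDeriv_eq_zero_of_lt_natDegree h b hlt)
    have hlt := hreal hz hble
    have hb0 : (0:ℝ) < b := by exact_mod_cast hb
    have hR : v.vr h < v.vr (hasseDeriv b h) + b * ε := by
      rw [div_lt_iff₀ hb0] at hlt; linarith
    rw [v.nu_coe_vr hne, v.nu_coe_vr hz, ← WithTop.coe_add]
    exact_mod_cast hR

/-- Uniform derivative bounds with slope `ε`, sharp exactly (last time) at index `m`. -/
def Rp (v : PolyVal K) (ε : ℝ) (h : Polynomial K) (m : ℕ) : Prop :=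
  h ≠ 0 ∧
  (∀ b : ℕ, v.ν h ≤ v.ν (hasseDeriv b h) + ((b * ε : ℝ) : WithTop ℝ)) ∧
  v.ν h = v.ν (hasseDeriv m h) + ((m * ε : ℝ) : WithTop ℝ) ∧
  ∀ b : ℕ, m < b → v.ν h < v.ν (hasseDeriv b h) + ((b * ε : ℝ) : WithTop ℝ)

lemma Rp_const {a : Polynomial K} (ha : a ≠ 0) (h0 : a.natDegree = 0) (ε : ℝ) :
    v.Rp ε a 0 := by
  refine ⟨ha, ?_, ?_, ?_⟩
  · intro b
    rcases Nat.eq_zero_or_pos b with hb | hb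
    · subst hb; simp
    · rw [hasseDeriv_eq_zero_of_lt_natDegree a b (by omega), v.nu_zero_poly, top_add]
      exact le_top
  · simp
  · intro b hb
    rw [hasseDeriv_eq_zero_of_lt_natDegree a b (by omega), v.nu_zero_poly, top_add]
    exact lt_top_iff_ne_top.2 (v.nu_ne_top ha)

lemma Rp_small {a : Polynomial K} (ha : a ≠ 0) {ε : ℝ}
    (hsm : a.natDegree = 0 ∨ v.eps a < ε) : v.Rp ε a 0 := by
  rcases hsm with h0 | hlt
  · exact v.Rp_const ha h0 ε
  have hstrict : ∀ b : ℕ, 1 ≤ b →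
      v.ν a < v.ν (hasseDeriv b a) + ((b * ε : ℝ) : WithTop ℝ) := by
    intro b hb
    refine v.nu_lt_deriv_add ha hb (fun hz hble => ?_)
    exact lt_of_le_of_lt (v.div_le_eps (lt_of_lt_of_le hb hble) (mem_epsFin.2 ⟨hb, hble, hz⟩)) hlt
  refine ⟨ha, ?_, by simp, fun b hb => hstrict b hb⟩
  intro b
  rcases Nat.eq_zero_or_pos b with hb | hb
  · subst hb; simp
  · exact (hstrict b hb).le

lemma Rp_self {Q : Polynomial K} (hh : 0 < Q.natDegree) : v.Rp (v.eps Q) Q (v.bMax Q) := by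
  obtain ⟨hmem, heq, hmax⟩ := v.bMax_spec (h := Q) hh
  obtain ⟨hb1, hble, hz⟩ := mem_epsFin.1 hmem
  have hQ0 : Q ≠ 0 := fun h0 => by simp [h0] at hh
  refine ⟨hQ0, ?_, ?_, ?_⟩
  · intro b
    rcases Nat.eq_zero_or_pos b with hb | hb
    · subst hb; simp
    · exact v.nu_le_deriv_add hh le_rfl hb
  · have hb0 : (0:ℝ) < (v.bMax Q : ℝ) := by exact_mod_cast hb1
    have hR : v.vr Q = v.vr (hasseDeriv (v.bMax Q) Q) + (v.bMax Q) * v.eps Q := by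
      field_simp at heq
      linarith
    rw [v.nu_coe_vr hQ0, v.nu_coe_vr hz, ← WithTop.coe_add]
    exact_mod_cast hR
  · intro b hb
    refine v.nu_lt_deriv_add hQ0 (by omega) (fun hz' hble' => ?_)
    exact lt_of_le_of_ne (v.div_le_eps hh (mem_epsFin.2 ⟨by omega, hble', hz'⟩))
      (hmax b (mem_epsFin.2 ⟨by omega, hble', hz'⟩) hb)

lemma coe_mul_add_cast (i j : ℕ) (ε : ℝ) :
    ((i * ε : ℝ) : WithTop ℝ) + ((j * ε : ℝ) : WithTop ℝ) = (((i + j : ℕ) * ε : ℝ) : WithTop ℝ) := by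
  rw [← WithTop.coe_add]
  congr 1
  push_cast
  ring

lemma Rp_mul {ε : ℝ} {h₁ h₂ : Polynomial K} {m₁ m₂ : ℕ}
    (H1 : v.Rp ε h₁ m₁) (H2 : v.Rp ε h₂ m₂) : v.Rp ε (h₁ * h₂) (m₁ + m₂) := by
  obtain ⟨hne1, hle1, heq1, hlt1⟩ := H1
  obtain ⟨hne2, hle2, heq2, hlt2⟩ := H2
  have hne : h₁ * h₂ ≠ 0 := mul_ne_zero hne1 hne2
  have hT1 : v.ν h₁ ≠ ⊤ := v.nu_ne_top hne1
  have hT2 : v.ν h₂ ≠ ⊤ := v.nu_ne_top hne2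
  have hmul : v.ν (h₁ * h₂) = v.ν h₁ + v.ν h₂ := v.ν_mul _ _
  have key_le : ∀ i j : ℕ,
      v.ν (h₁ * h₂) ≤ v.ν (hasseDeriv i h₁ * hasseDeriv j h₂) + (((i + j : ℕ) * ε : ℝ) : WithTop ℝ) := by
    intro i j
    rw [hmul, v.ν_mul, ← coe_mul_add_cast]
    calc v.ν h₁ + v.ν h₂
        ≤ (v.ν (hasseDeriv i h₁) + ((i * ε : ℝ) : WithTop ℝ)) +
          (v.ν (hasseDeriv j h₂) + ((j * ε : ℝ) : WithTop ℝ)) := add_le_add (hle1 i) (hle2 j)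
      _ = v.ν (hasseDeriv i h₁) + v.ν (hasseDeriv j h₂) +
          (((i * ε : ℝ) : WithTop ℝ) + ((j * ε : ℝ) : WithTop ℝ)) := by abel
  have key_lt : ∀ i j : ℕ, (m₁ < i ∨ m₂ < j) →
      v.ν (h₁ * h₂) < v.ν (hasseDeriv i h₁ * hasseDeriv j h₂) + (((i + j : ℕ) * ε : ℝ) : WithTop ℝ) := by
    intro i j hij
    rw [hmul, v.ν_mul, ← coe_mul_add_cast]
    have habel : v.ν (hasseDeriv i h₁) + v.ν (hasseDeriv j h₂) +
          (((i * ε : ℝ) : WithTop ℝ) + ((j * ε : ℝ) : WithTop ℝ)) =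
        (v.ν (hasseDeriv i h₁) + ((i * ε : ℝ) : WithTop ℝ)) +
          (v.ν (hasseDeriv j h₂) + ((j * ε : ℝ) : WithTop ℝ)) := by abel
    rw [habel]
    rcases hij with hi | hj
    · exact WithTop.add_lt_add_of_lt_of_le hT2 (hlt1 i hi) (hle2 j)
    · exact WithTop.add_lt_add_of_le_of_lt hT1 (hle1 i) (hlt2 j hj)
  refine ⟨hne, ?_, ?_, ?_⟩
  · intro b
    rw [hasseDeriv_mul]
    refine v.le_nu_sum_add (fun p hp => ?_)
    have hpb : p.1 + p.2 = b := Finset.HasAntidiagonal.mem_antidiagonal.1 hp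
    rw [← hpb]
    exact key_le p.1 p.2
  · rw [hasseDeriv_mul]
    have hterm : v.ν (hasseDeriv m₁ h₁ * hasseDeriv m₂ h₂) =
        v.ν ((fun p : ℕ × ℕ => hasseDeriv p.1 h₁ * hasseDeriv p.2 h₂) (m₁, m₂)) := rfl
    have hsum : v.ν (∑ p ∈ Finset.HasAntidiagonal.antidiagonal (m₁ + m₂),
          hasseDeriv p.1 h₁ * hasseDeriv p.2 h₂) =
        v.ν (hasseDeriv m₁ h₁ * hasseDeriv m₂ h₂) := by
      refine v.nu_sum_eq (i₀ := (m₁, m₂)) (by simp) (fun p hp hne' => ?_)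
      have hpb : p.1 + p.2 = m₁ + m₂ := Finset.HasAntidiagonal.mem_antidiagonal.1 hp
      have hij : m₁ < p.1 ∨ m₂ < p.2 := by
        rcases Nat.lt_or_ge m₁ p.1 with h | h
        · exact Or.inl h
        · refine Or.inr ?_
          rcases Nat.lt_or_ge m₂ p.2 with h' | h'
          · exact h'
          · exfalso; apply hne'
            have : p.1 = m₁ := by omega
            have : p.2 = m₂ := by omega
            exact Prod.ext (by omega) (by omega)
      have h1 := key_lt p.1 p.2 hij
      have h2 : v.ν (h₁ * h₂) =
          v.ν (hasseDeriv m₁ h₁ * hasseDeriv m₂ h₂) + (((m₁ + m₂ : ℕ) * ε : ℝ) : WithTop ℝ) := by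
        rw [hmul, v.ν_mul, ← coe_mul_add_cast, heq1, heq2]
        abel
      rw [hpb] at h1
      rw [h2] at h1
      exact lt_of_add_lt_add_right h1
    rw [hsum, hmul, v.ν_mul, ← coe_mul_add_cast, heq1, heq2]
    abel
  · intro b hb
    rw [hasseDeriv_mul]
    refine v.lt_nu_sum_add (v.nu_ne_top hne) (fun p hp => ?_)
    have hpb : p.1 + p.2 = b := Finset.HasAntidiagonal.mem_antidiagonal.1 hp
    have hij : m₁ < p.1 ∨ m₂ < p.2 := by omega
    rw [← hpb]
    exact key_lt p.1 p.2 hij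

lemma Rp_pow {ε : ℝ} {Q : Polynomial K} {m : ℕ} (H : v.Rp ε Q m) :
    ∀ i : ℕ, v.Rp ε (Q ^ i) (i * m) := by
  intro i
  induction i with
  | zero => simpa using v.Rp_const (a := (1 : Polynomial K)) one_ne_zero natDegree_one ε
  | succ i ih =>
    have h2 := v.Rp_mul ih H
    rw [← pow_succ] at h2
    have hm : i * m + m = (i + 1) * m := by ring
    rwa [hm] at h2

end PolyVal
end Aux

section Expand
variable {K : Type*} [Field K]

lemma divByMonic_pow_succ {Q : Polynomial K} (hQ : Q.Monic) (f : Polynomial K) (i : ℕ) :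
    f /ₘ Q ^ (i + 1) = f /ₘ Q /ₘ Q ^ i := by
  have hQi : (Q ^ i).Monic := hQ.pow i
  have hQsi : (Q ^ (i + 1)).Monic := hQ.pow _
  refine (Polynomial.div_modByMonic_unique (f /ₘ Q /ₘ Q ^ i)
    (f %ₘ Q + Q * ((f /ₘ Q) %ₘ Q ^ i)) hQsi ⟨?_, ?_⟩).1
  · have h1 : f %ₘ Q + Q * (f /ₘ Q) = f := modByMonic_add_div f Q
    have h2 : (f /ₘ Q) %ₘ Q ^ i + Q ^ i * (f /ₘ Q /ₘ Q ^ i) = f /ₘ Q := modByMonic_add_div _ (Q ^ i)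
    calc f %ₘ Q + Q * ((f /ₘ Q) %ₘ Q ^ i) + Q ^ (i + 1) * (f /ₘ Q /ₘ Q ^ i)
        = f %ₘ Q + Q * ((f /ₘ Q) %ₘ Q ^ i + Q ^ i * (f /ₘ Q /ₘ Q ^ i)) := by ring
      _ = f := by rw [h2, h1]
  · have hQ0 : Q ≠ 0 := hQ.ne_zero
    have d1 : (f %ₘ Q).degree < Q.degree := degree_modByMonic_lt f hQ
    have d2 : ((f /ₘ Q) %ₘ Q ^ i).degree < (Q ^ i).degree := degree_modByMonic_lt _ hQi
    have hdeg : (Q ^ (i + 1)).degree = Q.degree + (Q ^ i).degree := by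
      rw [pow_succ, mul_comm, degree_mul]
    refine lt_of_le_of_lt (degree_add_le _ _) (max_lt ?_ ?_)
    · refine lt_of_lt_of_le d1 ?_
      rw [hdeg]
      have h0 : (0 : WithBot ℕ) ≤ (Q ^ i).degree := zero_le_degree_iff.2 (pow_ne_zero _ hQ0)
      calc Q.degree = Q.degree + 0 := (add_zero _).symm
        _ ≤ Q.degree + (Q ^ i).degree := add_le_add_right h0 _
    · rw [degree_mul, hdeg]
      exact WithBot.add_lt_add_left (fun hb => hQ0 (Polynomial.degree_eq_bot.1 hb)) d2

lemma qCoeff_zero (Q f : Polynomial K) : qCoeff Q f 0 = f %ₘ Q := by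
  unfold qCoeff
  rw [pow_zero, Polynomial.divByMonic_one]

lemma qCoeff_succ {Q : Polynomial K} (hQ : Q.Monic) (f : Polynomial K) (i : ℕ) :
    qCoeff Q f (i + 1) = qCoeff Q (f /ₘ Q) i := by
  unfold qCoeff
  rw [divByMonic_pow_succ hQ]

lemma qCoeff_expansion_small {Q f : Polynomial K} (hQ : Q.Monic) (hn : 0 < Q.natDegree)
    (hdlt : f.degree < Q.degree) :
    ∑ i ∈ Finset.range (f.natDegree / Q.natDegree + 1), qCoeff Q f i * Q ^ i = f := by
  have h0 : f.natDegree / Q.natDegree = 0 := by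
    apply Nat.div_eq_of_lt
    rcases eq_or_ne f 0 with hf | hf
    · simpa [hf] using hn
    · exact Polynomial.natDegree_lt_natDegree hf hdlt
  rw [h0, Finset.sum_range_one, qCoeff_zero, pow_zero, mul_one,
    (Polynomial.modByMonic_eq_self_iff hQ).2 hdlt]

lemma qCoeff_expansion_aux {Q : Polynomial K} (hQ : Q.Monic) (hn : 0 < Q.natDegree) :
    ∀ N (f : Polynomial K), f.natDegree ≤ N →
      ∑ i ∈ Finset.range (f.natDegree / Q.natDegree + 1), qCoeff Q f i * Q ^ i = f := by
  intro N
  induction N with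
  | zero =>
    intro f hf
    refine qCoeff_expansion_small hQ hn ?_
    rcases eq_or_ne f 0 with hf0 | hf0
    · rw [hf0, Polynomial.degree_zero]
      exact bot_lt_iff_ne_bot.2 (fun hb => hQ.ne_zero (Polynomial.degree_eq_bot.1 hb))
    · rw [Polynomial.degree_eq_natDegree hf0, Polynomial.degree_eq_natDegree hQ.ne_zero]
      exact_mod_cast by omega
  | succ N ih =>
    intro f hf
    by_cases hdlt : f.degree < Q.degree
    · exact qCoeff_expansion_small hQ hn hdlt
    · push_neg at hdlt
      have hf0 : f ≠ 0 := by
        intro h0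
        rw [h0, Polynomial.degree_zero, le_bot_iff, Polynomial.degree_eq_bot] at hdlt
        exact hQ.ne_zero hdlt
      have hnd : Q.natDegree ≤ f.natDegree := Polynomial.natDegree_le_natDegree hdlt
      have hq'deg : (f /ₘ Q).natDegree = f.natDegree - Q.natDegree :=
        Polynomial.natDegree_divByMonic f hQ
      have hih := ih (f /ₘ Q) (by omega)
      have hdiv : f.natDegree / Q.natDegree = (f /ₘ Q).natDegree / Q.natDegree + 1 := by
        rw [hq'deg]
        exact Nat.div_eq_sub_div hn hnd
      rw [hdiv, Finset.sum_range_succ', qCoeff_zero]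
      have hterm : ∀ i, qCoeff Q f (i + 1) * Q ^ (i + 1) = qCoeff Q (f /ₘ Q) i * Q ^ i * Q := by
        intro i
        rw [qCoeff_succ hQ, pow_succ, mul_assoc]
      rw [Finset.sum_congr rfl (fun i _ => hterm i), ← Finset.sum_mul, hih]
      calc f /ₘ Q * Q + f %ₘ Q * Q ^ 0 = f %ₘ Q + Q * (f /ₘ Q) := by ring
        _ = f := modByMonic_add_div f Q

lemma qCoeff_expansion {Q : Polynomial K} (hQ : Q.Monic) (hn : 0 < Q.natDegree)
    (f : Polynomial K) :
    ∑ i ∈ Finset.range (f.natDegree / Q.natDegree + 1), qCoeff Q f i * Q ^ i = f :=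
  qCoeff_expansion_aux hQ hn f.natDegree f le_rfl

end Expand
section Main
variable {K : Type*} [Field K]

lemma wt_sub_lt {x c : ℝ} {y : WithTop ℝ}
    (h : (x : WithTop ℝ) < y + ((c : ℝ) : WithTop ℝ)) :
    ((x - c : ℝ) : WithTop ℝ) < y := by
  cases y with
  | top => exact WithTop.coe_lt_top _
  | coe z =>
    rw [← WithTop.coe_add, WithTop.coe_lt_coe] at h
    rw [WithTop.coe_lt_coe]
    linarith

lemma wt_sub_le {x c : ℝ} {y : WithTop ℝ}
    (h : (x : WithTop ℝ) ≤ y + ((c : ℝ) : WithTop ℝ)) :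
    ((x - c : ℝ) : WithTop ℝ) ≤ y := by
  cases y with
  | top => exact le_top
  | coe z =>
    rw [← WithTop.coe_add, WithTop.coe_le_coe] at h
    rw [WithTop.coe_le_coe]
    linarith

lemma wt_eq_add {x c : ℝ} {y : WithTop ℝ}
    (h : (x : WithTop ℝ) = y + ((c : ℝ) : WithTop ℝ)) :
    y = ((x - c : ℝ) : WithTop ℝ) := by
  cases y with
  | top => simp [top_add] at h
  | coe z =>
    rw [← WithTop.coe_add, WithTop.coe_eq_coe] at h
    rw [WithTop.coe_eq_coe]
    linarith

theorem keypol_main (v : PolyVal K) (n : ℕ) (hn : 0 < n)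
    (Q : Polynomial K) (hQ : Q ∈ v.Psi n)
    (f q r : Polynomial K) (hfqr : f = q * Q + r) (hq : q ≠ 0)
    (hf : 0 < f.natDegree)
    (γ : ℝ) (hfγ : v.eps f ≤ γ) (hγQ : γ < v.eps Q)
    (hrγ : 0 < r.natDegree → v.eps r ≤ γ) :
    v.ν f = v.ν r ∧ v.ν f + ((v.eps Q - γ : ℝ) : WithTop ℝ) ≤ v.nuQ Q (q * Q) := by
  classical
  obtain ⟨⟨hQm, hQd, hkey⟩, hQn⟩ := hQ
  set εQ := v.eps Q with hεQ
  set δ := εQ - γ with hδdef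
  have hδ : 0 < δ := by simp [hδdef]; linarith
  set g := q * Q with hg
  have hg0 : g ≠ 0 := mul_ne_zero hq hQm.ne_zero
  have hf0 : f ≠ 0 := fun h0 => by simp [h0] at hf
  set B := v.bMax Q with hB
  have RQ : v.Rp εQ Q B := v.Rp_self hQd
  have hB1 : 1 ≤ B := (PolyVal.mem_epsFin.1 (v.bMax_spec hQd).1).1
  set D := g.natDegree / Q.natDegree with hD
  set t : ℕ → Polynomial K := fun i => qCoeff Q g i * Q ^ i with ht
  set s : Finset ℕ := Finset.range (D + 1) with hs
  have hexp : ∑ i ∈ s, t i = g := qCoeff_expansion hQm hQd g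
  have hμdef : v.nuQ Q g = s.inf fun i => v.ν (t i) := rfl
  set μ := s.inf fun i => v.ν (t i) with hμ
  -- μ is not ⊤
  have hμtop : μ ≠ ⊤ := by
    intro hT
    rw [Finset.inf_eq_top_iff] at hT
    apply hg0
    rw [← hexp]
    refine Finset.sum_eq_zero (fun i hi => ?_)
    exact (v.ν_eq_top_iff (t i)).1 (hT i hi)
  -- the filter of minimizing indices
  set S' : Finset ℕ := s.filter (fun i => v.ν (t i) = μ) with hS'
  have hS'ne : S'.Nonempty := by
    obtain ⟨i, hi, hieq⟩ := Finset.exists_mem_eq_inf s ⟨0, by simp [hs]⟩ (fun i => v.ν (t i))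
    exact ⟨i, Finset.mem_filter.2 ⟨hi, hieq.symm⟩⟩
  set i₀ := S'.max' hS'ne with hi₀
  have hi₀S : i₀ ∈ S' := S'.max'_mem hS'ne
  have hi₀s : i₀ ∈ s := (Finset.mem_filter.1 hi₀S).1
  have hi₀μ : v.ν (t i₀) = μ := (Finset.mem_filter.1 hi₀S).2
  have ht0 : t 0 = 0 := by
    have : qCoeff Q g 0 = 0 := by
      rw [qCoeff_zero]
      exact (Polynomial.modByMonic_eq_zero_iff_dvd hQm).2 (dvd_mul_left Q q)
    simp [ht, this]
  have hi₀1 : 1 ≤ i₀ := by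
    rcases Nat.eq_zero_or_pos i₀ with h0 | h1
    · exfalso
      apply hμtop
      rw [← hi₀μ, h0, ht0]
      exact v.nu_zero_poly
    · exact h1
  set b := i₀ * B with hb
  have hb1 : 1 ≤ b := Nat.one_le_iff_ne_zero.2 (by positivity)
  -- Rp for the terms
  have hRt : ∀ i, qCoeff Q g i ≠ 0 → v.Rp εQ (t i) (i * B) := by
    intro i hai
    have hdeg : (qCoeff Q g i).degree < Q.degree := by
      unfold qCoeff
      exact Polynomial.degree_modByMonic_lt _ hQm
    have hnd : (qCoeff Q g i).natDegree < Q.natDegree :=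
      Polynomial.natDegree_lt_natDegree hai hdeg
    have hsm : (qCoeff Q g i).natDegree = 0 ∨ v.eps (qCoeff Q g i) < εQ := by
      rcases Nat.eq_zero_or_pos (qCoeff Q g i).natDegree with h0 | hpos
      · exact Or.inl h0
      · refine Or.inr (not_le.1 (fun hle => ?_))
        exact absurd (hkey _ hpos hle) (by omega)
    have := v.Rp_mul (v.Rp_small hai hsm) (v.Rp_pow RQ i)
    simpa [ht] using this
  -- the real value of μ
  have hti₀0 : t i₀ ≠ 0 := by
    intro h0
    apply hμtop
    rw [← hi₀μ, h0]
    exact v.nu_zero_poly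
  obtain ⟨μ₀, hμcoe⟩ : ∃ x : ℝ, μ = ((x : ℝ) : WithTop ℝ) := by
    cases hμv : μ with
    | top => exact absurd hμv hμtop
    | coe x => exact ⟨x, rfl⟩
  -- value of the b-th derivative of each term
  have hta : v.ν (hasseDeriv b (t i₀)) = ((μ₀ - b * εQ : ℝ) : WithTop ℝ) := by
    have hai : qCoeff Q g i₀ ≠ 0 := fun h0 => hti₀0 (by simp [ht, h0])
    have hR := hRt i₀ hai
    have heq := hR.2.2.1
    rw [← hb, hi₀μ, hμcoe] at heq
    exact wt_eq_add heq
  have htb : ∀ i ∈ s, i ≠ i₀ →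
      ((μ₀ - b * εQ : ℝ) : WithTop ℝ) < v.ν (hasseDeriv b (t i)) := by
    intro i hi hne
    by_cases hai : qCoeff Q g i = 0
    · have : t i = 0 := by simp [ht, hai]
      rw [this, map_zero, v.nu_zero_poly]
      exact WithTop.coe_lt_top _
    · have hR := hRt i hai
      by_cases hiS : i ∈ S'
      · have hilt : i < i₀ := lt_of_le_of_ne (S'.le_max' i hiS) hne
        have hblt : i * B < b := by
          rw [hb]
          exact (Nat.mul_lt_mul_right (show 0 < B by omega)).2 hilt
        have hstrict := hR.2.2.2 b hblt
        rw [(Finset.mem_filter.1 hiS).2, hμcoe] at hstrict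
        exact wt_sub_lt hstrict
      · have hμlt : μ < v.ν (t i) := by
          refine lt_of_le_of_ne (Finset.inf_le hi) ?_
          intro hcontra
          exact hiS (Finset.mem_filter.2 ⟨hi, hcontra.symm⟩)
        have hle := hR.2.1 b
        have : μ < v.ν (hasseDeriv b (t i)) + ((b * εQ : ℝ) : WithTop ℝ) :=
          lt_of_lt_of_le hμlt hle
        rw [hμcoe] at this
        exact wt_sub_lt this
  -- value of the b-th derivative of g
  have hDg : v.ν (hasseDeriv b g) = ((μ₀ - b * εQ : ℝ) : WithTop ℝ) := by
    have hgsum : hasseDeriv b g = ∑ i ∈ s, hasseDeriv b (t i) := by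
      rw [← hexp, map_sum]
    have h4 : ∀ i ∈ s, i ≠ i₀ → v.ν (hasseDeriv b (t i₀)) < v.ν (hasseDeriv b (t i)) := by
      intro i hi hne
      rw [hta]
      exact htb i hi hne
    rw [hgsum, v.nu_sum_eq hi₀s h4, hta]
  -- upper bound via f and r
  have hfb : v.ν f ≤ v.ν (hasseDeriv b f) + ((b * γ : ℝ) : WithTop ℝ) :=
    v.nu_le_deriv_add hf hfγ hb1
  have hrb : v.ν r ≤ v.ν (hasseDeriv b r) + ((b * γ : ℝ) : WithTop ℝ) := by
    rcases Nat.eq_zero_or_pos r.natDegree with h0 | hpos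
    · by_cases hr0 : r = 0
      · simp [hr0, v.nu_zero_poly, top_add]
      · rw [hasseDeriv_eq_zero_of_lt_natDegree r b (by omega), v.nu_zero_poly, top_add]
        exact le_top
    · exact v.nu_le_deriv_add hpos (hrγ hpos) hb1
  have hgb : min (v.ν f) (v.ν r) ≤ v.ν (hasseDeriv b g) + ((b * γ : ℝ) : WithTop ℝ) := by
    have hsub : hasseDeriv b g = hasseDeriv b f + (- hasseDeriv b r) := by
      have : g = f + (-r) := by rw [hfqr, hg]; ring
      rw [this, map_add, map_neg]
    have h1 : min (v.ν (hasseDeriv b f)) (v.ν (hasseDeriv b r)) ≤ v.ν (hasseDeriv b g) := by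
      rw [hsub]
      refine le_trans (le_min ?_ ?_) (v.ν_add _ _)
      · exact min_le_left _ _
      · rw [v.nu_neg]
        exact min_le_right _ _
    refine le_trans ?_ (add_le_add_left h1 _)
    rcases min_cases (v.ν (hasseDeriv b f)) (v.ν (hasseDeriv b r)) with ⟨hm, _⟩ | ⟨hm, _⟩ <;>
      rw [hm]
    · exact le_trans (min_le_left _ _) hfb
    · exact le_trans (min_le_right _ _) hrb
  -- the key estimate
  have hkeyest : min (v.ν f) (v.ν r) ≤ ((μ₀ - δ : ℝ) : WithTop ℝ) := by
    have h2 : v.ν (hasseDeriv b g) + ((b * γ : ℝ) : WithTop ℝ) =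
        ((μ₀ - b * δ : ℝ) : WithTop ℝ) := by
      rw [hDg, ← WithTop.coe_add]
      congr 1
      rw [hδdef]
      ring
    rw [h2] at hgb
    refine le_trans hgb ?_
    rw [WithTop.coe_le_coe]
    have hbR : (1 : ℝ) ≤ (b : ℝ) := by exact_mod_cast hb1
    nlinarith
  have hνg : μ ≤ v.ν g := by
    rw [← hexp]
    exact v.le_nu_sum (fun i hi => Finset.inf_le hi)
  have hμgt : ((μ₀ - δ : ℝ) : WithTop ℝ) < μ := by
    rw [hμcoe, WithTop.coe_lt_coe]
    linarith
  -- ν r ≤ ν f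
  have hgμ : ((μ₀ - δ : ℝ) : WithTop ℝ) < v.ν g := lt_of_lt_of_le hμgt hνg
  have hrf : v.ν r ≤ v.ν f := by
    by_contra hc
    push_neg at hc
    have hmin : min (v.ν f) (v.ν r) = v.ν f := min_eq_left hc.le
    rw [hmin] at hkeyest
    have hfg : v.ν f < v.ν g := lt_of_le_of_lt hkeyest hgμ
    have hadd := v.ν_add g r
    rw [← hfqr] at hadd
    rcases min_le_iff.1 hadd with h3 | h3
    · exact absurd h3 (not_le.2 hfg)
    · exact absurd h3 (not_le.2 hc)
  have hmin : min (v.ν f) (v.ν r) = v.ν r := min_eq_right hrf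
  rw [hmin] at hkeyest
  have hfr : v.ν f ≤ v.ν r := by
    by_contra hc
    push_neg at hc
    have hrg : v.ν r < v.ν g := lt_of_le_of_lt hkeyest hgμ
    have hrw : f + -g = r := by rw [hfqr]; ring
    have hadd := v.ν_add f (-g)
    rw [hrw, v.nu_neg] at hadd
    rcases min_le_iff.1 hadd with h3 | h3
    · exact absurd h3 (not_le.2 hc)
    · exact absurd h3 (not_le.2 hrg)
  have heqfr : v.ν f = v.ν r := le_antisymm hfr hrf
  refine ⟨heqfr, ?_⟩
  have hfle : v.ν f ≤ ((μ₀ - δ : ℝ) : WithTop ℝ) := heqfr ▸ hkeyest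
  have h2 : v.ν f + ((δ : ℝ) : WithTop ℝ) ≤ μ := by
    refine le_trans (add_le_add_left hfle _) ?_
    rw [← WithTop.coe_add, hμcoe, WithTop.coe_le_coe]
    linarith
  exact h2
end Main
/-- Lemma `keypolmelhorado`: if `Q` is a key polynomial, `f = qQ + r` with
`ε(f) ≤ γ < ε(Q)` (and `ε(r) ≤ γ` if `r` is nonconstant), then `ν(f) = ν(r)` and
`ν_Q(qQ) − (ε(Q) − γ) ≥ ν(f)`. -/
theorem stmt_1 (v : PolyVal K) (n : ℕ) (hn : 0 < n)
    (Q : Polynomial K) (hQ : Q ∈ v.Psi n)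
    (f q r : Polynomial K) (hfqr : f = q * Q + r) (hq : q ≠ 0)
    (hf : 0 < f.natDegree)
    (γ : ℝ) (hfγ : v.eps f ≤ γ) (hγQ : γ < v.eps Q)
    (hrγ : 0 < r.natDegree → v.eps r ≤ γ) :
    v.ν f = v.ν r ∧ v.ν f + ((v.eps Q - γ : ℝ) : WithTop ℝ) ≤ v.nuQ Q (q * Q) := by
  exact keypol_main v n hn Q hQ f q r hfqr hq hf γ hfγ hγQ hrγ
end
end
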